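/- arXiv:2006.03862 — 5 statements merged into one kernel-verified Lean document; each statement's English description precedes it below -/
import Mathlib

section
/- Let Π be the two-phase reach-avoid problem on transition system S = (X,U,F) with running cost g, associated with nonempty sets A₁, A₂ ⊆ X and G₀ : X → [0,∞]. Let Π₂ = (X,U,F,G₂,g) be the reach-avoid problem associated with A₂ and G₀, with closed-loop performance L₂, and let μ₂ be a memoryless controller that is optimal for Π₂. Let Π₁ = (X,U,F,G₁,g) be the reach-avoid problem associated with A₁ and terminal cost L₂(·,μ₂), and let μ₁ be a memoryless controller with single-valued stopping component that is optimal for Π₁. Let μ be the controller defined by μ(x|[0;t], u|[0;t)) = μ₁(x(t)) if the stopping signal w of μ₁ along x satisfies w(s) = 0 for all s ∈ [0;t], and μ(x|[0;t], u|[0;t)) = μ₂(x(t)) otherwise. Then μ is optimal for Π, i.e. L(p,μ) = V(p) for all p ∈ X, where L and V are the closed-loop performance and value function of Π. -/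
open scoped ENNReal Classical

namespace TwoPhase

noncomputable section

variable {X U : Type*}

/-- The behaviour of the transition system `(X, U, F)` initialized at `p`:
`x 0 = p` and `x (t+1) ∈ F (x t) (u t)` for all `t`. -/
def Behaviour (F : X → U → Set X) (p : X) (u : ℕ → U) (x : ℕ → X) : Prop :=
  x 0 = p ∧ ∀ t, x (t + 1) ∈ F (x t) (u t)

/-- A general (history-dependent) controller, encoded as a map depending on the
time `t` and the full signals, required to be strict (nonempty valued) and causal:
its value at time `t` only depends on `x|[0;t]` and `u|[0;t)`. -/
def IsController (μ : ℕ → (ℕ → X) → (ℕ → U) → Set (U × Bool)) : Prop :=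
  (∀ t x u, (μ t x u).Nonempty) ∧
    ∀ (t : ℕ) (x x' : ℕ → X) (u u' : ℕ → U),
      (∀ s ≤ t, x s = x' s) → (∀ s < t, u s = u' s) → μ t x u = μ t x' u'

/-- The history-dependent controller induced by a memoryless controller. -/
def ofMemoryless (μ : X → Set (U × Bool)) : ℕ → (ℕ → X) → (ℕ → U) → Set (U × Bool) :=
  fun t x _ => μ (x t)

/-- The closed-loop behaviour `B_p(μ × S)`. -/
def ClosedLoop (F : X → U → Set X) (μ : ℕ → (ℕ → X) → (ℕ → U) → Set (U × Bool))
    (p : X) (u : ℕ → U) (v : ℕ → Bool) (x : ℕ → X) : Prop :=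
  Behaviour F p u x ∧ ∀ t, (u t, v t) ∈ μ t x u

/-- The total cost `J(u,v,x)` associated with running cost `g` and
trajectory cost `G` (where `G T x` is the cost of the finite trajectory `x|[0;T]`):
if `v` is not identically `0` and `T = min v⁻¹(1)`, it is
`∑_{t<T} g (x t) (x (t+1)) (u t) + G T x`; otherwise it is `∞`. -/
def totalCost (g : X → X → U → ℝ≥0∞) (G : ℕ → (ℕ → X) → ℝ≥0∞)
    (u : ℕ → U) (v : ℕ → Bool) (x : ℕ → X) : ℝ≥0∞ :=
  if h : ∃ t, v t = true then
    (∑ t ∈ Finset.range (Nat.find h), g (x t) (x (t + 1)) (u t)) + G (Nat.find h) x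
  else ⊤

/-- The closed-loop performance `L(p, μ)` of the optimal control problem
`(X, U, F, G, g)`. -/
def perf (F : X → U → Set X) (g : X → X → U → ℝ≥0∞) (G : ℕ → (ℕ → X) → ℝ≥0∞)
    (μ : ℕ → (ℕ → X) → (ℕ → U) → Set (U × Bool)) (p : X) : ℝ≥0∞ :=
  ⨆ (u : ℕ → U) (v : ℕ → Bool) (x : ℕ → X) (_ : ClosedLoop F μ p u v x),
    totalCost g G u v x

/-- The value function `V(p)` of the optimal control problem `(X, U, F, G, g)`. -/
def value (F : X → U → Set X) (g : X → X → U → ℝ≥0∞) (G : ℕ → (ℕ → X) → ℝ≥0∞)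
    (p : X) : ℝ≥0∞ :=
  ⨅ (μ : ℕ → (ℕ → X) → (ℕ → U) → Set (U × Bool)) (_ : IsController μ),
    perf F g G μ p

/-- The (terminal) trajectory cost of the reach-avoid problem associated with `A`
and `G₀`. -/
def reachAvoidCost (A : Set X) (G₀ : X → ℝ≥0∞) : ℕ → (ℕ → X) → ℝ≥0∞ :=
  fun T x => if x T ∈ A then G₀ (x T) else ⊤

/-- The trajectory cost of the two-phase reach-avoid problem associated with
`A₁`, `A₂` and `G₀`. -/
def twoPhaseCost (A₁ A₂ : Set X) (G₀ : X → ℝ≥0∞) : ℕ → (ℕ → X) → ℝ≥0∞ :=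
  fun t x => if (∃ s ≤ t, x s ∈ A₁) ∧ x t ∈ A₂ then G₀ (x t) else ⊤

/-- A trajectory cost which is a terminal cost `G : X → [0,∞]`. -/
def termCost (G : X → ℝ≥0∞) : ℕ → (ℕ → X) → ℝ≥0∞ := fun T x => G (x T)

/-- The stopping component of a memoryless controller is single-valued. -/
def SVStop (μ : X → Set (U × Bool)) : Prop :=
  ∀ q : X, (∀ w ∈ μ q, w.2 = false) ∨ (∀ w ∈ μ q, w.2 = true)

/-- The composed controller `μ` of Proposition 1: it plays `μ₁` as long as the
stopping signal `w` of `μ₁` along `x` satisfies `w s = 0` for all `s ∈ [0;t]`,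
and plays `μ₂` afterwards. -/
def composed (μ₁ μ₂ : X → Set (U × Bool)) :
    ℕ → (ℕ → X) → (ℕ → U) → Set (U × Bool) :=
  fun t x _ =>
    if ∀ s ≤ t, ∀ w ∈ μ₁ (x s), w.2 = false then μ₁ (x t) else μ₂ (x t)

/-- The refined controller `μ' ∘ Q` of a memoryless abstract controller `μ'`,
where `Q` is the quantizer: `(μ' ∘ Q) p = ⋃_{Ω ∈ X', p ∈ Ω} μ' Ω`. -/
def refineCtrl {XA : Set (Set X)} {UA : Set U} (μ' : ↥XA → Set (↥UA × Bool)) :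
    X → Set (U × Bool) :=
  fun p => ⋃ (Ω : ↥XA) (_ : p ∈ (Ω : Set X)),
    (fun w : ↥UA × Bool => ((w.1 : U), w.2)) '' μ' Ω

end

end TwoPhase

namespace TwoPhase

-- ==================== AUX ====================
noncomputable section Aux

variable {X U : Type*}

lemma totalCost_le_perf {F : X → U → Set X} {g : X → X → U → ℝ≥0∞} {G : ℕ → (ℕ → X) → ℝ≥0∞}
    {μ : ℕ → (ℕ → X) → (ℕ → U) → Set (U × Bool)} {p : X} {u : ℕ → U} {v : ℕ → Bool} {x : ℕ → X}
    (h : ClosedLoop F μ p u v x) : totalCost g G u v x ≤ perf F g G μ p :=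
  le_iSup_of_le u (le_iSup_of_le v (le_iSup_of_le x (le_iSup_of_le h le_rfl)))

lemma perf_le {F : X → U → Set X} {g : X → X → U → ℝ≥0∞} {G : ℕ → (ℕ → X) → ℝ≥0∞}
    {μ : ℕ → (ℕ → X) → (ℕ → U) → Set (U × Bool)} {p : X} {c : ℝ≥0∞}
    (h : ∀ u v x, ClosedLoop F μ p u v x → totalCost g G u v x ≤ c) :
    perf F g G μ p ≤ c :=
  iSup_le fun u => iSup_le fun v => iSup_le fun x => iSup_le fun hc => h u v x hc

lemma add_perf_le {F : X → U → Set X} {g : X → X → U → ℝ≥0∞} {G : ℕ → (ℕ → X) → ℝ≥0∞}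
    {μ : ℕ → (ℕ → X) → (ℕ → U) → Set (U × Bool)} {q : X} {a c : ℝ≥0∞}
    (hne : ∃ u v x, ClosedLoop F μ q u v x)
    (h : ∀ u v x, ClosedLoop F μ q u v x → a + totalCost g G u v x ≤ c) :
    a + perf F g G μ q ≤ c := by
  obtain ⟨u0, v0, x0, h0⟩ := hne
  have hac : a ≤ c := le_trans le_self_add (h _ _ _ h0)
  rcases eq_or_ne a ⊤ with rfl | ha
  · rw [top_le_iff.mp hac]; exact le_top
  · have h1 : perf F g G μ q ≤ c - a :=
      perf_le fun u v x hc => ENNReal.le_sub_of_add_le_left ha (h u v x hc)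
    calc a + perf F g G μ q ≤ a + (c - a) := add_le_add_right h1 a
      _ = c := by rw [add_comm]; exact tsub_add_cancel_of_le hac

lemma find_eq_of {v : ℕ → Bool} (h : ∃ t, v t = true) {T : ℕ} (hT : v T = true)
    (hmin : ∀ s < T, v s = false) : Nat.find h = T := by
  refine le_antisymm (Nat.find_min' h hT) ?_
  rcases lt_or_ge (Nat.find h) T with hlt | hge
  · have := Nat.find_spec h
    rw [hmin _ hlt] at this
    exact absurd this (by simp)
  · exact hge

/-- Construction of a closed-loop trajectory for an arbitrary controller. -/
def approx [Nonempty U] (F : X → U → Set X) (hF : ∀ x u, (F x u).Nonempty)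
    (ν : ℕ → (ℕ → X) → (ℕ → U) → Set (U × Bool)) (hν : ∀ t x u, (ν t x u).Nonempty)
    (p : X) : ℕ → (ℕ → X) × (ℕ → U) × (ℕ → Bool)
  | 0 => (fun _ => p, fun _ => Classical.arbitrary U, fun _ => false)
  | (t+1) =>
      (fun s => if s ≤ t then (approx F hF ν hν p t).1 s
        else (hF ((approx F hF ν hν p t).1 t)
          (hν t (approx F hF ν hν p t).1 (approx F hF ν hν p t).2.1).choose.1).choose,
       fun s => if s < t then (approx F hF ν hν p t).2.1 s
        else (hν t (approx F hF ν hν p t).1 (approx F hF ν hν p t).2.1).choose.1,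
       fun s => if s < t then (approx F hF ν hν p t).2.2 s
        else (hν t (approx F hF ν hν p t).1 (approx F hF ν hν p t).2.1).choose.2)

lemma exists_closedLoop [Nonempty U] (F : X → U → Set X) (hF : ∀ x u, (F x u).Nonempty)
    (ν : ℕ → (ℕ → X) → (ℕ → U) → Set (U × Bool)) (hν : IsController ν) (p : X) :
    ∃ u v x, ClosedLoop F ν p u v x := by
  obtain ⟨hne, hcaus⟩ := hν
  set A := approx F hF ν hne p with hA
  set x : ℕ → X := fun t => (A t).1 t with hx
  set u : ℕ → U := fun t => (A (t+1)).2.1 t with hu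
  set v : ℕ → Bool := fun t => (A (t+1)).2.2 t with hv
  have hagree : ∀ t, (∀ s ≤ t, (A t).1 s = x s) ∧ (∀ s < t, (A t).2.1 s = u s)
      ∧ (∀ s < t, (A t).2.2 s = v s) := by
    intro t
    induction t with
    | zero => exact ⟨fun s hs => by rw [Nat.le_zero.mp hs], fun s hs => absurd hs (Nat.not_lt_zero s),
        fun s hs => absurd hs (Nat.not_lt_zero s)⟩
    | succ t ih =>
      obtain ⟨ihx, ihu, ihv⟩ := ih
      refine ⟨fun s hs => ?_, fun s hs => ?_, fun s hs => ?_⟩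
      · rcases Nat.lt_or_ge s (t+1) with h | h
        · have hst : s ≤ t := Nat.lt_succ_iff.mp h
          show (A (t+1)).1 s = x s
          rw [hA]; show (approx F hF ν hne p (t+1)).1 s = x s
          rw [approx]; simp only [if_pos hst]
          exact ihx s hst
        · have hst : s = t + 1 := le_antisymm hs h
          subst hst; rfl
      · rcases Nat.lt_or_ge s t with h | h
        · show (A (t+1)).2.1 s = u s
          rw [hA]; show (approx F hF ν hne p (t+1)).2.1 s = u s
          rw [approx]; simp only [if_pos h]
          exact ihu s h
        · have hst : s = t := le_antisymm (Nat.lt_succ_iff.mp hs) h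
          subst hst; rfl
      · rcases Nat.lt_or_ge s t with h | h
        · show (A (t+1)).2.2 s = v s
          rw [hA]; show (approx F hF ν hne p (t+1)).2.2 s = v s
          rw [approx]; simp only [if_pos h]
          exact ihv s h
        · have hst : s = t := le_antisymm (Nat.lt_succ_iff.mp hs) h
          subst hst; rfl
  have hx0 : x 0 = p := rfl
  have hw : ∀ t, (u t, v t) = (hne t (A t).1 (A t).2.1).choose := by
    intro t
    have h1 : u t = (hne t (A t).1 (A t).2.1).choose.1 := by
      show (A (t+1)).2.1 t = _
      rw [hA]; show (approx F hF ν hne p (t+1)).2.1 t = _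
      rw [approx]; simp
    have h2 : v t = (hne t (A t).1 (A t).2.1).choose.2 := by
      show (A (t+1)).2.2 t = _
      rw [hA]; show (approx F hF ν hne p (t+1)).2.2 t = _
      rw [approx]; simp
    rw [h1, h2]
  have hstep : ∀ t, x (t+1) ∈ F (x t) (u t) := by
    intro t
    have h1 : x (t+1) = (hF ((A t).1 t) (hne t (A t).1 (A t).2.1).choose.1).choose := by
      show (A (t+1)).1 (t+1) = _
      rw [hA]; show (approx F hF ν hne p (t+1)).1 (t+1) = _
      rw [approx]; simp
    have h3 : (A t).1 t = x t := (hagree t).1 t le_rfl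
    have h4 : (hne t (A t).1 (A t).2.1).choose.1 = u t := by rw [← hw t]
    rw [h1, ← h3, ← h4]
    exact (hF ((A t).1 t) (hne t (A t).1 (A t).2.1).choose.1).choose_spec
  have hctl : ∀ t, (u t, v t) ∈ ν t x u := by
    intro t
    have h1 := (hne t (A t).1 (A t).2.1).choose_spec
    rw [← hw t] at h1
    have h2 : ν t (A t).1 (A t).2.1 = ν t x u :=
      hcaus t _ x _ u (fun s hs => (hagree t).1 s hs) (fun s hs => (hagree t).2.1 s hs)
    rwa [h2] at h1
  exact ⟨u, v, x, ⟨hx0, hstep⟩, hctl⟩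


lemma claimA (F : X → U → Set X) (hF : ∀ x u, (F x u).Nonempty)
    (g : X → X → U → ℝ≥0∞) (G₀ : X → ℝ≥0∞) (A₁ A₂ : Set X)
    (μ₂ : X → Set (U × Bool)) (μ₁ : X → Set (U × Bool)) (hμ₁ : ∀ q, (μ₁ q).Nonempty)
    (hsv : SVStop μ₁) (p : X) :
    perf F g (twoPhaseCost A₁ A₂ G₀) (composed μ₁ μ₂) p ≤
      perf F g (reachAvoidCost A₁
        (fun r => perf F g (reachAvoidCost A₂ G₀) (ofMemoryless μ₂) r)) (ofMemoryless μ₁) p := by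
  set L₂ : X → ℝ≥0∞ := fun r => perf F g (reachAvoidCost A₂ G₀) (ofMemoryless μ₂) r with hL₂
  refine perf_le fun u v x hcl => ?_
  obtain ⟨⟨hx0, hstep⟩, hctl⟩ := hcl
  by_cases hC : ∀ t, ∀ w ∈ μ₁ (x t), w.2 = false
  · have hplay : ∀ t, (u t, v t) ∈ μ₁ (x t) := by
      intro t
      have h := hctl t
      simp only [composed] at h
      rwa [if_pos (fun s _ => hC s)] at h
    have hv : ∀ t, v t = false := fun t => hC t _ (hplay t)
    have hnv : ¬ ∃ t, v t = true := by rintro ⟨t, ht⟩; rw [hv t] at ht; exact Bool.false_ne_true ht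
    rw [totalCost, dif_neg hnv]
    have hcl1 : ClosedLoop F (ofMemoryless μ₁) p u v x := ⟨⟨hx0, hstep⟩, fun t => hplay t⟩
    have h2 := totalCost_le_perf (g := g) (G := reachAvoidCost A₁ L₂) hcl1
    rwa [totalCost, dif_neg hnv] at h2
  · rw [not_forall] at hC
    have hT₁ : ¬ ∀ w ∈ μ₁ (x (Nat.find hC)), w.2 = false := Nat.find_spec hC
    set T₁ := Nat.find hC with hT₁def
    have hbefore : ∀ s < T₁, ∀ w ∈ μ₁ (x s), w.2 = false := fun s hs => of_not_not (Nat.find_min hC hs)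
    have htrue : ∀ w ∈ μ₁ (x T₁), w.2 = true := (hsv (x T₁)).resolve_left hT₁
    have hplay₁ : ∀ t < T₁, (u t, v t) ∈ μ₁ (x t) := by
      intro t ht
      have h := hctl t
      simp only [composed] at h
      rwa [if_pos (fun s hs => hbefore s (lt_of_le_of_lt hs ht))] at h
    have hvlt : ∀ t < T₁, v t = false := fun t ht => hbefore t ht _ (hplay₁ t ht)
    have hplay₂ : ∀ t, T₁ ≤ t → (u t, v t) ∈ μ₂ (x t) := by
      intro t ht
      have h := hctl t
      simp only [composed] at h
      rwa [if_neg (fun hall => hT₁ (hall T₁ ht))] at h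
    -- witness trajectory for μ₁
    set pick : X → U × Bool := fun q => (hμ₁ q).choose with hpickdef
    have hpick : ∀ q, pick q ∈ μ₁ q := fun q => (hμ₁ q).choose_spec
    set y : ℕ → X := fun n => Nat.rec (x T₁) (fun _ r => (hF r (pick r).1).choose) n with hydef
    have hy0 : y 0 = x T₁ := rfl
    have hystep : ∀ n, y (n+1) ∈ F (y n) (pick (y n)).1 :=
      fun n => (hF (y n) (pick (y n)).1).choose_spec
    set x' : ℕ → X := fun t => if t < T₁ then x t else y (t - T₁) with hx'def
    set u' : ℕ → U := fun t => if t < T₁ then u t else (pick (x' t)).1 with hu'def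
    set v' : ℕ → Bool := fun t => if t < T₁ then false else (pick (x' t)).2 with hv'def
    have hx'eq : ∀ t ≤ T₁, x' t = x t := by
      intro t ht
      rcases lt_or_eq_of_le ht with h | h
      · simp only [hx'def, if_pos h]
      · subst h
        simp only [hx'def, if_neg (lt_irrefl T₁), Nat.sub_self]
        exact hy0
    have hx'ge : ∀ t, T₁ ≤ t → x' t = y (t - T₁) := by
      intro t ht; simp only [hx'def, if_neg (Nat.not_lt.mpr ht)]
    have hu'lt : ∀ t < T₁, u' t = u t := fun t ht => by simp only [hu'def, if_pos ht]
    have hu'ge : ∀ t, T₁ ≤ t → u' t = (pick (x' t)).1 :=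
      fun t ht => by simp only [hu'def, if_neg (Nat.not_lt.mpr ht)]
    have hv'lt : ∀ t < T₁, v' t = false := fun t ht => by simp only [hv'def, if_pos ht]
    have hv'ge : ∀ t, T₁ ≤ t → v' t = (pick (x' t)).2 :=
      fun t ht => by simp only [hv'def, if_neg (Nat.not_lt.mpr ht)]
    have hcl1 : ClosedLoop F (ofMemoryless μ₁) p u' v' x' := by
      refine ⟨⟨?_, ?_⟩, ?_⟩
      · rw [hx'eq 0 (Nat.zero_le _)]; exact hx0
      · intro t
        rcases Nat.lt_or_ge t T₁ with h | h
        · rw [hx'eq (t+1) h, hx'eq t h.le, hu'lt t h]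
          exact hstep t
        · rw [hx'ge t h, hx'ge (t+1) (h.trans (Nat.le_succ t)), hu'ge t h, hx'ge t h,
            Nat.succ_sub h]
          exact hystep (t - T₁)
      · intro t
        rcases Nat.lt_or_ge t T₁ with h | h
        · show (u' t, v' t) ∈ μ₁ (x' t)
          rw [hx'eq t h.le, hu'lt t h, hv'lt t h, ← hvlt t h]
          exact hplay₁ t h
        · show (u' t, v' t) ∈ μ₁ (x' t)
          rw [hu'ge t h, hv'ge t h]
          exact hpick (x' t)
    have hx'T₁ : x' T₁ = x T₁ := hx'eq T₁ le_rfl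
    have hv'T₁ : v' T₁ = true := by
      rw [hv'ge T₁ le_rfl, hx'T₁]
      exact htrue _ (hpick (x T₁))
    have hv'ex : ∃ t, v' t = true := ⟨T₁, hv'T₁⟩
    have hfind' : Nat.find hv'ex = T₁ := find_eq_of hv'ex hv'T₁ hv'lt
    have hJ₁ : totalCost g (reachAvoidCost A₁ L₂) u' v' x' =
        (∑ t ∈ Finset.range T₁, g (x t) (x (t + 1)) (u t)) +
          (if x T₁ ∈ A₁ then L₂ (x T₁) else ⊤) := by
      rw [totalCost, dif_pos hv'ex, hfind']
      congr 1
      · refine Finset.sum_congr rfl fun t ht => ?_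
        rw [Finset.mem_range] at ht
        rw [hx'eq t ht.le, hx'eq (t+1) ht, hu'lt t ht]
      · show (if x' T₁ ∈ A₁ then L₂ (x' T₁) else ⊤) = _
        rw [hx'T₁]
    have hperf1 := totalCost_le_perf (g := g) (G := reachAvoidCost A₁ L₂) hcl1
    rw [hJ₁] at hperf1
    refine le_trans ?_ hperf1
    -- now bound the two-phase cost of (u,v,x)
    by_cases hA : x T₁ ∈ A₁
    · rw [if_pos hA]
      -- tail is a μ₂ closed loop from x T₁
      have hcl2 : ClosedLoop F (ofMemoryless μ₂) (x T₁) (fun r => u (T₁ + r))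
          (fun r => v (T₁ + r)) (fun r => x (T₁ + r)) := by
        refine ⟨⟨rfl, fun r => hstep (T₁ + r)⟩, fun r => hplay₂ (T₁ + r) (Nat.le_add_right _ _)⟩
      have hJ₂ := totalCost_le_perf (g := g) (G := reachAvoidCost A₂ G₀) hcl2
      by_cases hvt : ∃ t, v t = true
      · have hT₁T : T₁ ≤ Nat.find hvt := by
          by_contra hlt
          rw [Nat.not_le] at hlt
          have := Nat.find_spec hvt
          rw [hvlt _ hlt] at this
          exact Bool.false_ne_true this
        set T := Nat.find hvt with hTdef
        have hvsex : ∃ r, (fun r => v (T₁ + r)) r = true :=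
          ⟨T - T₁, by show v (T₁ + (T - T₁)) = true; rw [Nat.add_sub_cancel' hT₁T]; exact Nat.find_spec hvt⟩
        have hfinds : Nat.find hvsex = T - T₁ := by
          refine find_eq_of hvsex ?_ ?_
          · show v (T₁ + (T - T₁)) = true
            rw [Nat.add_sub_cancel' hT₁T]; exact Nat.find_spec hvt
          · intro r hr
            show v (T₁ + r) = false
            have : T₁ + r < T := by omega
            have h2 := Nat.find_min hvt this
            exact Bool.of_not_eq_true h2
        rw [totalCost, dif_pos hvt, ← hTdef]
        have hsplit : T = T₁ + (T - T₁) := (Nat.add_sub_cancel' hT₁T).symm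
        rw [hsplit, Finset.sum_range_add, ← hsplit]
        have htail : totalCost g (reachAvoidCost A₂ G₀) (fun r => u (T₁ + r))
            (fun r => v (T₁ + r)) (fun r => x (T₁ + r)) =
            (∑ i ∈ Finset.range (T - T₁), g (x (T₁ + i)) (x (T₁ + i + 1)) (u (T₁ + i))) +
              (if x T ∈ A₂ then G₀ (x T) else ⊤) := by
          rw [totalCost, dif_pos hvsex, hfinds]
          congr 1
          show (if x (T₁ + (T - T₁)) ∈ A₂ then G₀ (x (T₁ + (T - T₁))) else ⊤) = _
          rw [Nat.add_sub_cancel' hT₁T]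
        have hcost : twoPhaseCost A₁ A₂ G₀ T x = (if x T ∈ A₂ then G₀ (x T) else ⊤) := by
          show (if (∃ s ≤ T, x s ∈ A₁) ∧ x T ∈ A₂ then G₀ (x T) else ⊤) = _
          by_cases h2 : x T ∈ A₂
          · rw [if_pos ⟨⟨T₁, hT₁T, hA⟩, h2⟩, if_pos h2]
          · rw [if_neg (fun hc => h2 hc.2), if_neg h2]
        rw [hcost, add_assoc]
        refine add_le_add_right ?_ _
        rw [htail] at hJ₂
        exact hJ₂
      · have hvsnone : ¬ ∃ r, (fun r => v (T₁ + r)) r = true := by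
          rintro ⟨r, hr⟩; exact hvt ⟨T₁ + r, hr⟩
        have hJ₂top : (⊤ : ℝ≥0∞) ≤ L₂ (x T₁) := by
          rw [totalCost, dif_neg hvsnone] at hJ₂
          exact hJ₂
        rw [top_le_iff.mp hJ₂top, add_top]
        exact le_top
    · rw [if_neg hA, add_top]
      exact le_top

lemma claimB [Nonempty U] (F : X → U → Set X) (hF : ∀ x u, (F x u).Nonempty)
    (g : X → X → U → ℝ≥0∞) (G₀ : X → ℝ≥0∞) (A₁ A₂ : Set X)
    (μ₂ : X → Set (U × Bool))
    (hopt₂ : ∀ q, perf F g (reachAvoidCost A₂ G₀) (ofMemoryless μ₂) q =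
      value F g (reachAvoidCost A₂ G₀) q)
    (ν : ℕ → (ℕ → X) → (ℕ → U) → Set (U × Bool)) (hν : IsController ν) (p : X) :
    value F g (reachAvoidCost A₁
      (fun r => perf F g (reachAvoidCost A₂ G₀) (ofMemoryless μ₂) r)) p ≤
      perf F g (twoPhaseCost A₁ A₂ G₀) ν p := by
  obtain ⟨hνne, hνc⟩ := hν
  set L₂ : X → ℝ≥0∞ := fun r => perf F g (reachAvoidCost A₂ G₀) (ofMemoryless μ₂) r with hL₂
  set flag : ℕ → (ℕ → X) → Bool :=
    fun t x => if x t ∈ A₁ ∧ ∀ r < t, x r ∉ A₁ then true else false with hflagdef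
  set ν₁ : ℕ → (ℕ → X) → (ℕ → U) → Set (U × Bool) :=
    fun t x u => (fun w : U × Bool => (w.1, flag t x)) '' ν t x u with hν₁def
  have hν₁ : IsController ν₁ := by
    constructor
    · intro t x u
      exact (hνne t x u).image _
    · intro t x x' u u' hx hu
      have hf : flag t x = flag t x' := by
        simp only [hflagdef]
        have h1 : x t = x' t := hx t le_rfl
        have h2 : (x t ∈ A₁ ∧ ∀ r < t, x r ∉ A₁) ↔ (x' t ∈ A₁ ∧ ∀ r < t, x' r ∉ A₁) := by
          rw [h1]
          exact and_congr Iff.rfl (forall₂_congr fun r hr => by rw [hx r hr.le])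
        exact if_congr h2 rfl rfl
      simp only [hν₁def, hf, hνc t x x' u u' hx hu]
  refine le_trans (iInf₂_le ν₁ hν₁) (perf_le fun u v₁ x hcl => ?_)
  obtain ⟨⟨hx0, hstep⟩, hctl⟩ := hcl
  have hctl' : ∀ t, ∃ w ∈ ν t x u, (w.1, flag t x) = (u t, v₁ t) := fun t => hctl t
  have hvex : ∀ t, ∃ b, (u t, b) ∈ ν t x u := by
    intro t
    obtain ⟨w, hw, hweq⟩ := hctl' t
    refine ⟨w.2, ?_⟩
    have h1 : w.1 = u t := congrArg Prod.fst hweq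
    rw [← h1]
    exact hw
  set v : ℕ → Bool := fun t => (hvex t).choose with hvdef
  have hv : ∀ t, (u t, v t) ∈ ν t x u := fun t => (hvex t).choose_spec
  have hclv : ClosedLoop F ν p u v x := ⟨⟨hx0, hstep⟩, hv⟩
  have hflageq : ∀ t, v₁ t = flag t x := by
    intro t
    obtain ⟨w, hw, hweq⟩ := hctl' t
    exact (congrArg Prod.snd hweq).symm
  by_cases hA : ∃ s, x s ∈ A₁
  case neg =>
    have hnoflag : ∀ t, v₁ t = false := by
      intro t
      rw [hflageq t]
      simp only [hflagdef]
      rw [if_neg (fun hc => hA ⟨t, hc.1⟩)]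
    have hnv₁ : ¬ ∃ t, v₁ t = true := by
      rintro ⟨t, ht⟩; rw [hnoflag t] at ht; exact Bool.false_ne_true ht
    rw [totalCost, dif_neg hnv₁]
    have hcost : totalCost g (twoPhaseCost A₁ A₂ G₀) u v x = ⊤ := by
      rw [totalCost]
      by_cases hvt : ∃ t, v t = true
      · rw [dif_pos hvt]
        have h2 : twoPhaseCost A₁ A₂ G₀ (Nat.find hvt) x = ⊤ := by
          show (if _ then _ else _) = ⊤
          rw [if_neg]
          rintro ⟨⟨s, _, hs⟩, _⟩
          exact hA ⟨s, hs⟩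
        rw [h2, add_top]
      · rw [dif_neg hvt]
    calc (⊤:ℝ≥0∞) = totalCost g (twoPhaseCost A₁ A₂ G₀) u v x := hcost.symm
      _ ≤ _ := totalCost_le_perf hclv
  case pos =>
  set s₀ := Nat.find hA with hs₀def
  have hs₀A : x s₀ ∈ A₁ := Nat.find_spec hA
  have hs₀min : ∀ r < s₀, x r ∉ A₁ := fun r hr => Nat.find_min hA hr
  have hv₁s₀ : v₁ s₀ = true := by
    rw [hflageq s₀]; simp only [hflagdef]; rw [if_pos ⟨hs₀A, hs₀min⟩]
  have hv₁lt : ∀ t < s₀, v₁ t = false := by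
    intro t ht
    rw [hflageq t]; simp only [hflagdef]
    rw [if_neg (fun hc => hs₀min t ht hc.1)]
  have hv₁ex : ∃ t, v₁ t = true := ⟨s₀, hv₁s₀⟩
  have hfind₁ : Nat.find hv₁ex = s₀ := find_eq_of hv₁ex hv₁s₀ hv₁lt
  rw [totalCost, dif_pos hv₁ex, hfind₁]
  have hterm : reachAvoidCost A₁ L₂ s₀ x = L₂ (x s₀) := by
    show (if x s₀ ∈ A₁ then L₂ (x s₀) else ⊤) = _
    rw [if_pos hs₀A]
  rw [hterm]
  by_cases hpre : ∃ t, t < s₀ ∧ v t = true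
  · obtain ⟨t₀, ht₀, hvt₀⟩ := hpre
    have hvt : ∃ t, v t = true := ⟨t₀, hvt₀⟩
    have hT : Nat.find hvt < s₀ := lt_of_le_of_lt (Nat.find_min' hvt hvt₀) ht₀
    have hcost : totalCost g (twoPhaseCost A₁ A₂ G₀) u v x = ⊤ := by
      rw [totalCost, dif_pos hvt]
      have h2 : twoPhaseCost A₁ A₂ G₀ (Nat.find hvt) x = ⊤ := by
        show (if _ then _ else _) = ⊤
        rw [if_neg]
        rintro ⟨⟨s, hsT, hs⟩, _⟩
        exact hs₀min s (lt_of_le_of_lt hsT hT) hs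
      rw [h2, add_top]
    calc _ ≤ (⊤:ℝ≥0∞) := le_top
      _ = totalCost g (twoPhaseCost A₁ A₂ G₀) u v x := hcost.symm
      _ ≤ _ := totalCost_le_perf hclv
  · push_neg at hpre
    have hvlt : ∀ t < s₀, v t = false := fun t ht => Bool.of_not_eq_true (hpre t ht)
    set ν' : ℕ → (ℕ → X) → (ℕ → U) → Set (U × Bool) := fun t' x' u' =>
      ν (s₀ + t') (fun r => if r < s₀ then x r else x' (r - s₀))
        (fun r => if r < s₀ then u r else u' (r - s₀)) with hν'def
    have hν'ctrl : IsController ν' := by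
      constructor
      · intro t' x' u'
        exact hνne _ _ _
      · intro t' y y' w w' hy hw
        simp only [hν'def]
        refine hνc _ _ _ _ _ (fun r hr => ?_) (fun r hr => ?_)
        · by_cases h : r < s₀
          · simp only [if_pos h]
          · simp only [if_neg h]; exact hy (r - s₀) (by omega)
        · by_cases h : r < s₀
          · simp only [if_pos h]
          · simp only [if_neg h]; exact hw (r - s₀) (by omega)
    have hL₂val : L₂ (x s₀) = value F g (reachAvoidCost A₂ G₀) (x s₀) := hopt₂ (x s₀)
    have hV₂ : value F g (reachAvoidCost A₂ G₀) (x s₀) ≤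
        perf F g (reachAvoidCost A₂ G₀) ν' (x s₀) := iInf₂_le ν' hν'ctrl
    rw [hL₂val]
    refine le_trans (add_le_add_right hV₂ _) ?_
    refine add_perf_le (exists_closedLoop F hF ν' hν'ctrl (x s₀)) ?_
    intro u'' v'' x'' hcl''
    obtain ⟨⟨hx''0, hstep''⟩, hctl''⟩ := hcl''
    set Xf : ℕ → X := fun r => if r < s₀ then x r else x'' (r - s₀) with hXfdef
    set Uf : ℕ → U := fun r => if r < s₀ then u r else u'' (r - s₀) with hUfdef
    set Vf : ℕ → Bool := fun r => if r < s₀ then false else v'' (r - s₀) with hVfdef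
    have hXflt : ∀ r, r < s₀ → Xf r = x r := fun r hr => by simp only [hXfdef, if_pos hr]
    have hXfge : ∀ r, s₀ ≤ r → Xf r = x'' (r - s₀) := fun r hr => by
      simp only [hXfdef, if_neg (Nat.not_lt.mpr hr)]
    have hXfle : ∀ r, r ≤ s₀ → Xf r = x r := by
      intro r hr
      rcases lt_or_eq_of_le hr with h | h
      · exact hXflt r h
      · rw [h, hXfge s₀ le_rfl, Nat.sub_self, hx''0]
    have hUflt : ∀ r, r < s₀ → Uf r = u r := fun r hr => by simp only [hUfdef, if_pos hr]
    have hUfge : ∀ r, s₀ ≤ r → Uf r = u'' (r - s₀) := fun r hr => by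
      simp only [hUfdef, if_neg (Nat.not_lt.mpr hr)]
    have hVflt : ∀ r, r < s₀ → Vf r = false := fun r hr => by simp only [hVfdef, if_pos hr]
    have hVfge : ∀ r, s₀ ≤ r → Vf r = v'' (r - s₀) := fun r hr => by
      simp only [hVfdef, if_neg (Nat.not_lt.mpr hr)]
    have hclf : ClosedLoop F ν p Uf Vf Xf := by
      refine ⟨⟨?_, ?_⟩, ?_⟩
      · rw [hXfle 0 (Nat.zero_le _)]; exact hx0
      · intro r
        rcases Nat.lt_or_ge r s₀ with h | h
        · rw [hXfle (r+1) h, hXfle r h.le, hUflt r h]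
          exact hstep r
        · rw [hXfge r h, hXfge (r+1) (h.trans (Nat.le_succ r)), hUfge r h, Nat.succ_sub h]
          exact hstep'' (r - s₀)
      · intro r
        rcases Nat.lt_or_ge r s₀ with h | h
        · have heq : ν r x u = ν r Xf Uf :=
            hνc r x Xf u Uf (fun s hs => (hXfle s (le_of_lt (lt_of_le_of_lt hs h))).symm)
              (fun s hs => (hUflt s (hs.trans h)).symm)
          rw [hUflt r h, hVflt r h, ← heq, ← hvlt r h]
          exact hv r
        · have heq : ν' (r - s₀) x'' u'' = ν r Xf Uf := by
            show ν (s₀ + (r - s₀)) _ _ = ν r Xf Uf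
            rw [Nat.add_sub_cancel' h]
          rw [hUfge r h, hVfge r h, ← heq]
          exact hctl'' (r - s₀)
    have hXfs₀ : Xf s₀ = x s₀ := hXfle s₀ le_rfl
    have hkey : (∑ t ∈ Finset.range s₀, g (x t) (x (t + 1)) (u t)) +
        totalCost g (reachAvoidCost A₂ G₀) u'' v'' x'' =
        totalCost g (twoPhaseCost A₁ A₂ G₀) Uf Vf Xf := by
      by_cases h'' : ∃ r, v'' r = true
      · set T'' := Nat.find h'' with hT''def
        have hvfT : Vf (s₀ + T'') = true := by
          rw [hVfge _ (Nat.le_add_right _ _), Nat.add_sub_cancel_left]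
          exact Nat.find_spec h''
        have hvfex : ∃ r, Vf r = true := ⟨s₀ + T'', hvfT⟩
        have hfindf : Nat.find hvfex = s₀ + T'' := by
          refine find_eq_of hvfex hvfT ?_
          intro r hr
          rcases Nat.lt_or_ge r s₀ with h | h
          · exact hVflt r h
          · rw [hVfge r h]
            have h3 : r - s₀ < T'' := by omega
            exact Bool.of_not_eq_true (Nat.find_min h'' h3)
        rw [totalCost, totalCost, dif_pos h'', dif_pos hvfex, hfindf, ← hT''def,
          Finset.sum_range_add]
        have hsum1 : ∀ t ∈ Finset.range s₀,
            g (Xf t) (Xf (t+1)) (Uf t) = g (x t) (x (t+1)) (u t) := by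
          intro t ht
          rw [Finset.mem_range] at ht
          rw [hXfle t ht.le, hXfle (t+1) ht, hUflt t ht]
        have hsum2 : ∀ i ∈ Finset.range T'',
            g (Xf (s₀ + i)) (Xf (s₀ + i + 1)) (Uf (s₀ + i)) = g (x'' i) (x'' (i+1)) (u'' i) := by
          intro i _
          have h1 : Xf (s₀ + i) = x'' i := by
            rw [hXfge _ (Nat.le_add_right _ _), Nat.add_sub_cancel_left]
          have h2 : Xf (s₀ + i + 1) = x'' (i + 1) := by
            have h4 : s₀ + i + 1 = s₀ + (i + 1) := by omega
            rw [h4, hXfge _ (Nat.le_add_right _ _), Nat.add_sub_cancel_left]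
          have h3 : Uf (s₀ + i) = u'' i := by
            rw [hUfge _ (Nat.le_add_right _ _), Nat.add_sub_cancel_left]
          rw [h1, h2, h3]
        rw [Finset.sum_congr rfl hsum1, Finset.sum_congr rfl hsum2]
        have hcost2 : twoPhaseCost A₁ A₂ G₀ (s₀ + T'') Xf = reachAvoidCost A₂ G₀ T'' x'' := by
          have hXT : Xf (s₀ + T'') = x'' T'' := by
            rw [hXfge _ (Nat.le_add_right _ _), Nat.add_sub_cancel_left]
          show (if (∃ s ≤ s₀ + T'', Xf s ∈ A₁) ∧ Xf (s₀ + T'') ∈ A₂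
              then G₀ (Xf (s₀ + T'')) else ⊤) =
            (if x'' T'' ∈ A₂ then G₀ (x'' T'') else ⊤)
          rw [hXT]
          by_cases h2 : x'' T'' ∈ A₂
          · rw [if_pos ⟨⟨s₀, Nat.le_add_right _ _, by rw [hXfs₀]; exact hs₀A⟩, h2⟩, if_pos h2]
          · rw [if_neg (fun hc => h2 hc.2), if_neg h2]
        rw [hcost2, add_assoc]
      · have hvfnone : ¬ ∃ r, Vf r = true := by
          rintro ⟨r, hr⟩
          rcases Nat.lt_or_ge r s₀ with h | h
          · rw [hVflt r h] at hr; exact Bool.false_ne_true hr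
          · rw [hVfge r h] at hr; exact h'' ⟨r - s₀, hr⟩
        rw [totalCost, totalCost, dif_neg h'', dif_neg hvfnone, add_top]
    rw [hkey]
    exact totalCost_le_perf hclf


lemma composed_isController (μ₁ μ₂ : X → Set (U × Bool)) (hμ₁ : ∀ q, (μ₁ q).Nonempty)
    (hμ₂ : ∀ q, (μ₂ q).Nonempty) : IsController (composed μ₁ μ₂) := by
  constructor
  · intro t x u
    simp only [composed]
    split_ifs
    · exact hμ₁ _
    · exact hμ₂ _
  · intro t x x' u u' hx hu
    simp only [composed]
    have hc : (∀ s ≤ t, ∀ w ∈ μ₁ (x s), w.2 = false) ↔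
        (∀ s ≤ t, ∀ w ∈ μ₁ (x' s), w.2 = false) :=
      forall₂_congr fun s hs => by rw [hx s hs]
    rw [if_congr hc (by rw [hx t le_rfl]) (by rw [hx t le_rfl])]

end Aux

/-- Theorem 1 of the paper. With `Π`, `Π₁`, `Π₂` and the
composed controller `μ` as in Proposition 1, if additionally `μ₂` is optimal
for `Π₂` and `μ₁` is optimal for `Π₁`, then `μ` is optimal for `Π`, i.e.
`L(p,μ) = V(p)` for all `p ∈ X`. -/
theorem composed_optimal
    {X U : Type*} [Nonempty X] [Nonempty U]
    (F : X → U → Set X) (hF : ∀ x u, (F x u).Nonempty)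
    (g : X → X → U → ℝ≥0∞) (G₀ : X → ℝ≥0∞)
    (A₁ A₂ : Set X) (hA₁ : A₁.Nonempty) (hA₂ : A₂.Nonempty)
    (μ₂ : X → Set (U × Bool)) (hμ₂ : ∀ q, (μ₂ q).Nonempty)
    (μ₁ : X → Set (U × Bool)) (hμ₁ : ∀ q, (μ₁ q).Nonempty) (hsv : SVStop μ₁)
    (hopt₂ : ∀ q, perf F g (reachAvoidCost A₂ G₀) (ofMemoryless μ₂) q =
      value F g (reachAvoidCost A₂ G₀) q)
    (hopt₁ : ∀ q, perf F g
        (reachAvoidCost A₁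
          (fun r => perf F g (reachAvoidCost A₂ G₀) (ofMemoryless μ₂) r))
        (ofMemoryless μ₁) q =
      value F g
        (reachAvoidCost A₁
          (fun r => perf F g (reachAvoidCost A₂ G₀) (ofMemoryless μ₂) r)) q)
    (p : X) :
    perf F g (twoPhaseCost A₁ A₂ G₀) (composed μ₁ μ₂) p =
      value F g (twoPhaseCost A₁ A₂ G₀) p := by
  have hcomp := composed_isController μ₁ μ₂ hμ₁ hμ₂
  refine le_antisymm ?_ (iInf₂_le _ hcomp)
  calc perf F g (twoPhaseCost A₁ A₂ G₀) (composed μ₁ μ₂) p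
      ≤ perf F g (reachAvoidCost A₁
          (fun r => perf F g (reachAvoidCost A₂ G₀) (ofMemoryless μ₂) r))
          (ofMemoryless μ₁) p := claimA F hF g G₀ A₁ A₂ μ₂ μ₁ hμ₁ hsv p
    _ = value F g (reachAvoidCost A₁
          (fun r => perf F g (reachAvoidCost A₂ G₀) (ofMemoryless μ₂) r)) p := hopt₁ p
    _ ≤ value F g (twoPhaseCost A₁ A₂ G₀) p :=
        le_iInf₂ fun ν hν => claimB F hF g G₀ A₁ A₂ μ₂ hopt₂ ν hν p

end TwoPhase
end

section
/- Let Π = (X,U,F,G,g) and Π' = (X',U',F',G',g') be optimal control problems with terminal costs G : X → [0,∞] and G' : X' → [0,∞], such that: (i) X' is a cover of X by nonempty subsets of X; (ii) U' ⊆ U; and whenever x ∈ Ω ∈ X', x' ∈ Ω' ∈ X', u ∈ U': (iii) if Ω' ∩ (⋃_{y∈Ω} F(y,u)) ≠ ∅ then Ω' ∈ F'(Ω,u); (iv) G(x) ≤ G'(Ω); (v) g(x,x',u) ≤ g'(Ω,Ω',u). Let μ' be a memoryless controller for Π' and let Q : X → Set X' be the quantizer defined by Ω ∈ Q(p) ⟺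 p ∈ Ω. Then the refined controller μ'∘Q (the memoryless controller on X mapping p to ⋃_{Ω ∈ Q(p)} μ'(Ω)) satisfies L(p, μ'∘Q) ≤ sup{ L'(Ω, μ') : Ω ∈ X', p ∈ Ω } for all p ∈ X, where L and L' are the closed-loop performances of Π and Π'. -/
open scoped ENNReal Classical

namespace TwoPhase

/-- Theorem 2 of the paper, from [ReissigRungger18]. Let
`Π = (X,U,F,G,g)` and `Π' = (X',U',F',G',g')` be optimal control problems with
terminal costs `G`, `G'` such that (i) `X'` is a cover of `X` by nonempty sets,
(ii) `U' ⊆ U`, and whenever `x ∈ Ω ∈ X'`, `x' ∈ Ω' ∈ X'`, `u ∈ U'`: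
(iii) `Ω' ∩ F(Ω,u) ≠ ∅ ⇒ Ω' ∈ F'(Ω,u)`, (iv) `G x ≤ G' Ω`,
(v) `g x x' u ≤ g' Ω Ω' u`.  Then for every memoryless abstract controller `μ'`
the refined controller `μ' ∘ Q` satisfies
`L(p, μ'∘Q) ≤ sup { L'(Ω,μ') | p ∈ Ω }` for all `p ∈ X`. -/
theorem refinement_le
    {X U : Type*} [Nonempty X] [Nonempty U]
    (F : X → U → Set X) (hF : ∀ x u, (F x u).Nonempty)
    (g : X → X → U → ℝ≥0∞) (G : X → ℝ≥0∞)
    (XA : Set (Set X)) (UA : Set U)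
    (hcover : ∀ p : X, ∃ Ω ∈ XA, p ∈ Ω) (hΩne : ∀ Ω ∈ XA, Ω.Nonempty)
    (F' : ↥XA → ↥UA → Set ↥XA) (hF' : ∀ Ω u, (F' Ω u).Nonempty)
    (g' : ↥XA → ↥XA → ↥UA → ℝ≥0∞) (G' : ↥XA → ℝ≥0∞)
    (hiii : ∀ (Ω Ω' : ↥XA) (u : ↥UA),
      ((Ω' : Set X) ∩ ⋃ y ∈ (Ω : Set X), F y u).Nonempty → Ω' ∈ F' Ω u)
    (hiv : ∀ (x : X) (Ω : ↥XA), x ∈ (Ω : Set X) → G x ≤ G' Ω)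
    (hv : ∀ (x x' : X) (Ω Ω' : ↥XA) (u : ↥UA),
      x ∈ (Ω : Set X) → x' ∈ (Ω' : Set X) → g x x' u ≤ g' Ω Ω' u)
    (μ' : ↥XA → Set (↥UA × Bool)) (hμ' : ∀ Ω, (μ' Ω).Nonempty)
    (p : X) :
    perf F g (termCost G) (ofMemoryless (refineCtrl μ')) p ≤
      ⨆ (Ω : ↥XA) (_ : p ∈ (Ω : Set X)),
        perf F' g' (termCost G') (ofMemoryless μ') Ω := by
  rw [perf]
  refine iSup_le fun u => iSup_le fun v => iSup_le fun x => iSup_le fun hcl => ?_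
  obtain ⟨⟨hx0, hstep⟩, hctrl⟩ := hcl
  have hsel : ∀ t, ∃ (Ω : ↥XA) (w : ↥UA × Bool),
      x t ∈ (Ω : Set X) ∧ w ∈ μ' Ω ∧ (↑w.1 : U) = u t ∧ w.2 = v t := by
    intro t
    have h := hctrl t
    simp only [ofMemoryless, refineCtrl, Set.mem_iUnion, Set.mem_image] at h
    obtain ⟨Ω, hΩ, w, hw, hweq⟩ := h
    exact ⟨Ω, w, hΩ, hw, (Prod.mk.injEq _ _ _ _ ▸ hweq).1, (Prod.mk.injEq _ _ _ _ ▸ hweq).2⟩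
  choose Ω w hmem hwμ hw1 hw2 using hsel
  set u' : ℕ → ↥UA := fun t => (w t).1 with hu'
  have hcl' : ClosedLoop F' (ofMemoryless μ') (Ω 0) u' v (fun t => Ω t) := by
    refine ⟨⟨rfl, fun t => ?_⟩, fun t => ?_⟩
    · apply hiii
      refine ⟨x (t + 1), hmem (t + 1), ?_⟩
      simp only [Set.mem_iUnion]
      exact ⟨x t, hmem t, by rw [hu', hw1]; exact hstep t⟩
    · have : (u' t, v t) = w t := Prod.ext rfl (hw2 t).symm
      rw [ofMemoryless, this]
      exact hwμ t
  have hcost : totalCost g (termCost G) u v x ≤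
      totalCost g' (termCost G') u' v (fun t => Ω t) := by
    unfold totalCost
    by_cases h : ∃ t, v t = true
    · simp only [dif_pos h]
      gcongr with t _
      · have := hv (x t) (x (t + 1)) (Ω t) (Ω (t + 1)) (u' t) (hmem t) (hmem (t + 1))
        rwa [hu', hw1] at this
      · exact hiv _ _ (hmem _)
    · simp [h]
  calc totalCost g (termCost G) u v x
      ≤ perf F' g' (termCost G') (ofMemoryless μ') (Ω 0) :=
        hcost.trans (by
          rw [perf]
          refine le_trans ?_ (le_iSup _ u')
          refine le_trans ?_ (le_iSup _ v)
          refine le_trans ?_ (le_iSup _ (fun t => Ω t))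
          exact le_iSup (fun _ : ClosedLoop F' (ofMemoryless μ') (Ω 0) u' v
            (fun t => Ω t) => totalCost g' (termCost G') u' v (fun t => Ω t)) hcl')
    _ ≤ _ := by
        refine le_trans ?_ (le_iSup _ (Ω 0))
        exact le_iSup (fun _ : p ∈ (Ω 0 : Set X) =>
          perf F' g' (termCost G') (ofMemoryless μ') (Ω 0)) (hx0 ▸ hmem 0)

end TwoPhase
end

section
/- Let X, U be nonempty sets, g : X × X × U → [0,∞] a running cost, A₁, A₂ ⊆ X nonempty, G₀ : X → [0,∞], and let J be the total cost of the two-phase reach-avoid problem associated with A₁, A₂, G₀, and J₂ the total cost of the reach-avoid problem associated with A₂ and G₀ (both with running cost g). Let (u,v,x) ∈ (U × {0,1} × X)^ℕ with v not identically 0, set T = min v⁻¹(1), and let τ ∈ ℕ with τ ≤ T and x(τ) ∈ A₁. Then J(u,v,x) = Σ_{t=0}^{τ−1} g(x(t),x(t+1),u(t)) + J₂(σ^τ u, σ^τ v, σ^τ x), where σ^τ denotes the backward shift by τ, (σ^τ f)(t) = f(t+τ). -/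
open scoped ENNReal Classical

namespace TwoPhase

/-- cost-splitting identity in the proof of Proposition 1.
Let `J` be the total cost of the two-phase reach-avoid problem associated with
`A₁`, `A₂`, `G₀` and `J₂` the total cost of the reach-avoid problem associated
with `A₂` and `G₀`, both with running cost `g`. If `v` is not identically `0`,
`T = min v⁻¹(1)`, `τ ≤ T` and `x τ ∈ A₁`, then
`J(u,v,x) = ∑_{t<τ} g (x t) (x (t+1)) (u t) + J₂(σ^τ u, σ^τ v, σ^τ x)`. -/
theorem totalCost_twoPhase_split
    {X U : Type*} [Nonempty X] [Nonempty U]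
    (g : X → X → U → ℝ≥0∞) (G₀ : X → ℝ≥0∞)
    (A₁ A₂ : Set X) (hA₁ : A₁.Nonempty) (hA₂ : A₂.Nonempty)
    (u : ℕ → U) (v : ℕ → Bool) (x : ℕ → X)
    (hv : ∃ t, v t = true) (τ : ℕ) (hτ : τ ≤ Nat.find hv) (hx : x τ ∈ A₁) :
    totalCost g (twoPhaseCost A₁ A₂ G₀) u v x =
      (∑ t ∈ Finset.range τ, g (x t) (x (t + 1)) (u t)) +
        totalCost g (reachAvoidCost A₂ G₀)
          (fun t => u (t + τ)) (fun t => v (t + τ)) (fun t => x (t + τ)) := by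
  classical
  set T := Nat.find hv with hT
  have hv' : ∃ t, v (t + τ) = true := ⟨T - τ, by rw [Nat.sub_add_cancel hτ]; exact Nat.find_spec hv⟩
  have hfind : Nat.find hv' = T - τ := by
    apply le_antisymm
    · exact Nat.find_le (by rw [Nat.sub_add_cancel hτ]; exact Nat.find_spec hv)
    · by_contra h
      push_neg at h
      have := Nat.find_spec hv'
      have hlt : Nat.find hv' + τ < T := by omega
      exact absurd this (by simpa using Nat.find_min hv hlt)
  rw [totalCost, dif_pos hv, totalCost, dif_pos hv', hfind]
  have hsum : ∑ t ∈ Finset.range T, g (x t) (x (t + 1)) (u t) =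
      (∑ t ∈ Finset.range τ, g (x t) (x (t + 1)) (u t)) +
        ∑ t ∈ Finset.range (T - τ), g (x (t + τ)) (x (t + 1 + τ)) (u (t + τ)) := by
    have hsr := Finset.sum_range_add (fun t => g (x t) (x (t + 1)) (u t)) τ (T - τ)
    rw [show τ + (T - τ) = T by omega] at hsr
    rw [hsr]
    congr 1
    refine Finset.sum_congr rfl fun t _ => ?_
    rw [Nat.add_comm τ t, show t + τ + 1 = t + 1 + τ by omega]
  have hG : twoPhaseCost A₁ A₂ G₀ T x =
      reachAvoidCost A₂ G₀ (T - τ) (fun t => x (t + τ)) := by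
    simp only [twoPhaseCost, reachAvoidCost]
    have hx2 : x (T - τ + τ) = x T := by congr 1; omega
    rw [hx2]
    by_cases h2 : x T ∈ A₂
    · rw [if_pos ⟨⟨τ, hτ, hx⟩, h2⟩, if_pos h2]
    · rw [if_neg (fun h => h2 h.2), if_neg h2]
  rw [hsum, hG, add_assoc]


end TwoPhase
end

section
/- Let Π be the two-phase reach-avoid problem on transition system S = (X,U,F) with running cost g, associated with nonempty A₁, A₂ ⊆ X and G₀ : X → [0,∞], with closed-loop performance L. Let Π₂ be the reach-avoid problem associated with A₂ and G₀ with closed-loop performance L₂, μ₂ a memoryless controller, Π₁ the reach-avoid problem associated with A₁ and terminal cost L₂(·,μ₂) with closed-loop performance L₁, μ₁ a memoryless controller with single-valued stopping component, and μ the composed controller that applies μ₁ until its stopping signal first equals 1 and μ₂ thereafter. Then L(p,μ) ≤ L₁(p,μ₁) for all p ∈ X. -/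
open scoped ENNReal Classical

namespace TwoPhase

/-- Any closed-loop trajectory cost bounds the performance from below. -/
theorem le_perf' {X U : Type*} (F : X → U → Set X) (g : X → X → U → ℝ≥0∞)
    (G : ℕ → (ℕ → X) → ℝ≥0∞) (μ : ℕ → (ℕ → X) → (ℕ → U) → Set (U × Bool))
    (p : X) {u : ℕ → U} {v : ℕ → Bool} {x : ℕ → X}
    (h : ClosedLoop F μ p u v x) :
    totalCost g G u v x ≤ perf F g G μ p :=
  le_iSup_of_le u <| le_iSup_of_le v <| le_iSup_of_le x <| le_iSup_of_le h le_rfl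

/-- inequality `L(p,μ) ≤ L₁(p,μ₁)` from the proof of
Proposition 1.  With `Π`, `Π₁`, `Π₂`, `μ₁`, `μ₂` and the composed controller
`μ` as in Proposition 1, it holds that `L(p,μ) ≤ L₁(p,μ₁)` for all `p ∈ X`. -/
theorem perf_composed_le
    {X U : Type*} [Nonempty X] [Nonempty U]
    (F : X → U → Set X) (hF : ∀ x u, (F x u).Nonempty)
    (g : X → X → U → ℝ≥0∞) (G₀ : X → ℝ≥0∞)
    (A₁ A₂ : Set X) (hA₁ : A₁.Nonempty) (hA₂ : A₂.Nonempty)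
    (μ₂ : X → Set (U × Bool)) (hμ₂ : ∀ q, (μ₂ q).Nonempty)
    (μ₁ : X → Set (U × Bool)) (hμ₁ : ∀ q, (μ₁ q).Nonempty) (hsv : SVStop μ₁)
    (p : X) :
    perf F g (twoPhaseCost A₁ A₂ G₀) (composed μ₁ μ₂) p ≤
      perf F g
        (reachAvoidCost A₁
          (fun q => perf F g (reachAvoidCost A₂ G₀) (ofMemoryless μ₂) q))
        (ofMemoryless μ₁) p := by
  classical
  set L₂ : X → ℝ≥0∞ := fun q => perf F g (reachAvoidCost A₂ G₀) (ofMemoryless μ₂) q with hL₂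
  refine iSup_le fun u => iSup_le fun v => iSup_le fun x => iSup_le fun hcl => ?_
  obtain ⟨⟨hx0, hdyn⟩, hctrl⟩ := hcl
  by_cases hP : ∀ t, ∀ w ∈ μ₁ (x t), w.2 = false
  · -- phase 1 never ends
    have hcomp : ∀ t, composed μ₁ μ₂ t x u = μ₁ (x t) := fun t => by
      unfold composed; exact if_pos fun s _ => hP s
    have hmem : ∀ t, (u t, v t) ∈ μ₁ (x t) := fun t => by
      rw [← hcomp t]; exact hctrl t
    have hnot : ¬ ∃ t, v t = true := by
      rintro ⟨t, ht⟩
      have := hP t _ (hmem t)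
      simp only [ht] at this; exact absurd this (by simp)
    have h1 : totalCost g (twoPhaseCost A₁ A₂ G₀) u v x = ⊤ := dif_neg hnot
    have h2 : totalCost g (reachAvoidCost A₁ L₂) u v x = ⊤ := dif_neg hnot
    rw [h1, ← h2]
    exact le_perf' _ _ _ _ _ ⟨⟨hx0, hdyn⟩, fun t => hmem t⟩
  · -- phase 1 ends
    have hE : ∃ t, ¬ ∀ w ∈ μ₁ (x t), w.2 = false := not_forall.mp hP
    set T₁ := Nat.find hE with hT₁def
    have hPlt : ∀ s < T₁, ∀ w ∈ μ₁ (x s), w.2 = false := fun s hs =>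
      not_not.mp (Nat.find_min hE hs)
    have hT₁true : ∀ w ∈ μ₁ (x T₁), w.2 = true :=
      (hsv (x T₁)).resolve_left (Nat.find_spec hE)
    have hcomp₁ : ∀ t < T₁, composed μ₁ μ₂ t x u = μ₁ (x t) := fun t ht => by
      unfold composed; exact if_pos fun s hs => hPlt s (lt_of_le_of_lt hs ht)
    have hcomp₂ : ∀ t, T₁ ≤ t → composed μ₁ μ₂ t x u = μ₂ (x t) := fun t ht => by
      unfold composed
      refine if_neg fun hall => Nat.find_spec hE (hall T₁ ht)
    have hmem₁ : ∀ t < T₁, (u t, v t) ∈ μ₁ (x t) := fun t ht => by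
      rw [← hcomp₁ t ht]; exact hctrl t
    have hvlt : ∀ t < T₁, v t = false := fun t ht => hPlt t ht _ (hmem₁ t ht)
    have hmem₂ : ∀ t, T₁ ≤ t → (u t, v t) ∈ μ₂ (x t) := fun t ht => by
      rw [← hcomp₂ t ht]; exact hctrl t
    -- auxiliary continuation for the μ₁ closed loop
    obtain ⟨y, hy0, hystep⟩ :
        ∃ y : ℕ → X, y 0 = x T₁ ∧
          ∀ k, y (k + 1) = (hF (y k) ((hμ₁ (y k)).some.1)).some :=
      ⟨fun k => Nat.rec (x T₁) (fun _ yk => (hF yk ((hμ₁ yk).some.1)).some) k,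
        rfl, fun k => rfl⟩
    set x' : ℕ → X := fun t => if t ≤ T₁ then x t else y (t - T₁) with hx'def
    set u' : ℕ → U := fun t => if t < T₁ then u t else (hμ₁ (x' t)).some.1 with hu'def
    set v' : ℕ → Bool := fun t => if t < T₁ then false else (hμ₁ (x' t)).some.2 with hv'def
    have hx'le : ∀ t ≤ T₁, x' t = x t := fun t ht => if_pos ht
    have hx'ge : ∀ t, T₁ ≤ t → x' t = y (t - T₁) := by
      intro t ht
      rcases eq_or_lt_of_le ht with h | h
      · rw [hx'le t h.symm.le, ← h, Nat.sub_self, hy0]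
      · exact if_neg (not_le.mpr h)
    have hu'lt : ∀ t < T₁, u' t = u t := fun t ht => if_pos ht
    have hv'lt : ∀ t < T₁, v' t = false := fun t ht => if_pos ht
    have hcl' : ClosedLoop F (ofMemoryless μ₁) p u' v' x' := by
      refine ⟨⟨by rw [hx'le 0 (Nat.zero_le _), hx0], ?_⟩, ?_⟩
      · intro t
        rcases lt_or_ge t T₁ with ht | ht
        · rw [hx'le (t + 1) ht, hx'le t ht.le, hu'lt t ht]
          exact hdyn t
        · have h1 : x' t = y (t - T₁) := hx'ge t ht
          have h2 : x' (t + 1) = y (t + 1 - T₁) := hx'ge (t + 1) (le_trans ht (Nat.le_succ t))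
          have h3 : t + 1 - T₁ = (t - T₁) + 1 := Nat.succ_sub ht
          have hu : u' t = (hμ₁ (x' t)).some.1 := if_neg (not_lt.mpr ht)
          rw [h2, h3, hystep, hu, h1]
          exact (hF _ _).some_mem
      · intro t
        show (u' t, v' t) ∈ μ₁ (x' t)
        rcases lt_or_ge t T₁ with ht | ht
        · rw [hu'lt t ht, hv'lt t ht, hx'le t ht.le]
          have := hmem₁ t ht
          rwa [hvlt t ht] at this
        · have hu : u' t = (hμ₁ (x' t)).some.1 := if_neg (not_lt.mpr ht)
          have hv : v' t = (hμ₁ (x' t)).some.2 := if_neg (not_lt.mpr ht)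
          rw [hu, hv]
          exact (hμ₁ (x' t)).some_mem
    have hv'T₁ : v' T₁ = true := by
      have hx'T₁ : x' T₁ = x T₁ := hx'le T₁ le_rfl
      have hv : v' T₁ = (hμ₁ (x' T₁)).some.2 := if_neg (lt_irrefl T₁)
      rw [hv, hx'T₁]
      exact hT₁true _ (hμ₁ (x T₁)).some_mem
    have hv'ex : ∃ t, v' t = true := ⟨T₁, hv'T₁⟩
    have hfind' : Nat.find hv'ex = T₁ := by
      refine (Nat.find_eq_iff hv'ex).mpr ⟨hv'T₁, fun n hn => ?_⟩
      rw [hv'lt n hn]; simp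
    -- RHS bound
    have hRHS :
        (∑ t ∈ Finset.range T₁, g (x t) (x (t + 1)) (u t)) +
            (if x T₁ ∈ A₁ then L₂ (x T₁) else ⊤) ≤
          perf F g (reachAvoidCost A₁ L₂) (ofMemoryless μ₁) p := by
      refine le_trans (le_of_eq ?_) (le_perf' _ _ _ _ _ hcl')
      rw [totalCost, dif_pos hv'ex, hfind']
      congr 1
      · refine Finset.sum_congr rfl fun t ht => ?_
        have ht' : t < T₁ := Finset.mem_range.mp ht
        rw [hx'le t ht'.le, hx'le (t + 1) ht', hu'lt t ht']
      · rw [reachAvoidCost, hx'le T₁ le_rfl]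
    refine le_trans ?_ hRHS
    by_cases hA : x T₁ ∈ A₁
    · rw [if_pos hA]
      -- the tail trajectory is a μ₂ closed loop from x T₁
      have hcl₂ : ClosedLoop F (ofMemoryless μ₂) (x T₁)
          (fun t => u (T₁ + t)) (fun t => v (T₁ + t)) (fun t => x (T₁ + t)) := by
        refine ⟨⟨rfl, fun t => ?_⟩, fun t => ?_⟩
        · show x (T₁ + (t + 1)) ∈ F (x (T₁ + t)) (u (T₁ + t))
          rw [← Nat.add_assoc]
          exact hdyn (T₁ + t)
        · exact hmem₂ (T₁ + t) (Nat.le_add_right _ _)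
      have hL₂ge : totalCost g (reachAvoidCost A₂ G₀)
          (fun t => u (T₁ + t)) (fun t => v (T₁ + t)) (fun t => x (T₁ + t)) ≤
            L₂ (x T₁) := le_perf' _ _ _ _ _ hcl₂
      refine le_trans ?_ (add_le_add_right hL₂ge _)
      by_cases hvex : ∃ t, v t = true
      · have hT₁T : T₁ ≤ Nat.find hvex := by
          by_contra h
          have := hvlt _ (not_le.mp h)
          rw [Nat.find_spec hvex] at this
          exact absurd this (by simp)
        set T := Nat.find hvex with hTdef
        have hvex₂ : ∃ t, v (T₁ + t) = true :=
          ⟨T - T₁, by rw [Nat.add_sub_cancel' hT₁T]; exact Nat.find_spec hvex⟩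
        have hfind₂ : Nat.find hvex₂ = T - T₁ := by
          refine (Nat.find_eq_iff hvex₂).mpr
            ⟨by rw [Nat.add_sub_cancel' hT₁T]; exact Nat.find_spec hvex, fun n hn => ?_⟩
          have : T₁ + n < T := by omega
          exact Nat.find_min hvex this
        rw [totalCost, dif_pos hvex, totalCost, dif_pos hvex₂, hfind₂, ← hTdef]
        have hsplit : T = T₁ + (T - T₁) := (Nat.add_sub_cancel' hT₁T).symm
        calc (∑ t ∈ Finset.range T, g (x t) (x (t + 1)) (u t)) + twoPhaseCost A₁ A₂ G₀ T x
            = (∑ t ∈ Finset.range T₁, g (x t) (x (t + 1)) (u t)) +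
              ((∑ t ∈ Finset.range (T - T₁), g (x (T₁ + t)) (x (T₁ + t + 1)) (u (T₁ + t))) +
                twoPhaseCost A₁ A₂ G₀ T x) := by
              rw [← add_assoc]
              congr 1
              rw [hsplit, Finset.sum_range_add]
              simp [Nat.add_assoc]
          _ ≤ _ := by
              refine add_le_add_right (add_le_add_right (le_of_eq ?_) _) _
              rw [twoPhaseCost, reachAvoidCost]
              show (if (∃ s ≤ T, x s ∈ A₁) ∧ x T ∈ A₂ then G₀ (x T) else ⊤) = _
              have hxT : x (T₁ + (T - T₁)) = x T := by rw [← hsplit]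
              rw [hxT]
              exact if_congr (and_iff_right ⟨T₁, hT₁T, hA⟩) rfl rfl
      · rw [totalCost, dif_neg hvex]
        have hvex₂ : ¬ ∃ t, v (T₁ + t) = true := fun ⟨t, ht⟩ => hvex ⟨T₁ + t, ht⟩
        rw [totalCost, dif_neg hvex₂]
        simp
    · rw [if_neg hA]
      simp

end TwoPhase
end

section
/- Let S = (X,U,F) and S' = (X',U',F') be transition systems such that: (i) X' is a cover of X by nonempty subsets of X; (ii) U' ⊆ U; (iii) for all Ω, Ω' ∈ X' and u ∈ U', if Ω' ∩ (⋃_{y∈Ω} F(y,u)) ≠ ∅ then Ω' ∈ F'(Ω,u). Let μ' be a memoryless controller for S' and let Q : X → Set X' be the quantizer defined by Ω ∈ Q(p) ⟺ p ∈ Ω, and let μ'∘Q be the memoryless controller on X mapping p to ⋃_{Ω ∋ p} μ'(Ω). Then for every p ∈ X and every closed-loop signal (u,v,x) ∈ B_p((μ'∘Q) × S), there exists a signal Ω ∈ (X')^ℕ such that p ∈ Ω(0), x(t) ∈ Ω(t) for all t ∈ ℕ, and (u,v,Ω) ∈ B_{Ω(0)}(μ' × S'). -/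
open scoped ENNReal Classical

namespace TwoPhase

/-- [Th. V.4] of Reissig-Weber-Rungger, as used in the proof of
Theorem 3.  Let `S = (X,U,F)` and `S' = (X',U',F')` be transition systems with
`X'` a cover of `X` by nonempty sets, `U' ⊆ U`, and
`Ω' ∩ F(Ω,u) ≠ ∅ ⇒ Ω' ∈ F'(Ω,u)`.  Let `μ'` be a memoryless controller for
`S'` and `μ'∘Q` the refined controller.  Then every closed-loop signal
`(u,v,x) ∈ B_p((μ'∘Q) × S)` is traced by an abstract signal `Ω` with
`p ∈ Ω 0`, `x t ∈ Ω t` for all `t`, and `(u,v,Ω) ∈ B_{Ω 0}(μ' × S')`. -/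
theorem closedLoop_refined_traced
    {X U : Type*} [Nonempty X] [Nonempty U]
    (F : X → U → Set X) (hF : ∀ x u, (F x u).Nonempty)
    (XA : Set (Set X)) (UA : Set U)
    (hcover : ∀ p : X, ∃ Ω ∈ XA, p ∈ Ω) (hΩne : ∀ Ω ∈ XA, Ω.Nonempty)
    (F' : ↥XA → ↥UA → Set ↥XA) (hF' : ∀ Ω u, (F' Ω u).Nonempty)
    (hiii : ∀ (Ω Ω' : ↥XA) (u : ↥UA),
      ((Ω' : Set X) ∩ ⋃ y ∈ (Ω : Set X), F y u).Nonempty → Ω' ∈ F' Ω u)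
    (μ' : ↥XA → Set (↥UA × Bool)) (hμ' : ∀ Ω, (μ' Ω).Nonempty)
    (p : X) (u : ℕ → U) (v : ℕ → Bool) (x : ℕ → X)
    (hcl : ClosedLoop F (ofMemoryless (refineCtrl μ')) p u v x) :
    ∃ (Ω : ℕ → ↥XA) (u' : ℕ → ↥UA),
      (∀ t, (u' t : U) = u t) ∧
      p ∈ ((Ω 0 : ↥XA) : Set X) ∧
      (∀ t, x t ∈ ((Ω t : ↥XA) : Set X)) ∧
      ClosedLoop F' (ofMemoryless μ') (Ω 0) u' v Ω := by
 classical
  have key : ∀ t, ∃ (Ω : ↥XA) (u' : ↥UA), x t ∈ (Ω : Set X) ∧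
      (u' : U) = u t ∧ (u', v t) ∈ μ' Ω := by
    intro t
    have h := hcl.2 t
    simp only [ofMemoryless, refineCtrl, Set.mem_iUnion, Set.mem_image] at h
    obtain ⟨Ω, hxΩ, w, hw, hweq⟩ := h
    refine ⟨Ω, w.1, hxΩ, ?_, ?_⟩
    · exact congrArg Prod.fst hweq
    · have : w.2 = v t := congrArg Prod.snd hweq
      rwa [← this, Prod.mk.eta]
  choose Ω u' hx hu hμ using key
  refine ⟨Ω, u', hu, ?_, hx, ⟨rfl, ?_⟩, hμ⟩
  · have := hx 0
    rwa [hcl.1.1] at this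
  · intro t
    apply hiii
    refine ⟨x (t+1), hx (t+1), ?_⟩
    simp only [Set.mem_iUnion]
    exact ⟨x t, hx t, by rw [hu]; exact hcl.1.2 t⟩

end TwoPhase
end
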